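/- Let R be an integral domain and X an indeterminate over R. Then the formal power series ring R[[X]] is a big ideal domain if and only if R is a field. -/

import Mathlib

/-- An ideal `I` of a commutative ring `R` is a *big ideal* if whenever `J ⊊ I`,
`J ^ n ⊊ I ^ n` for every positive integer `n`. -/
def Ideal.IsBig {R : Type*} [CommRing R] (I : Ideal R) : Prop :=
  ∀ J : Ideal R, J < I → ∀ n : ℕ, 1 ≤ n → J ^ n < I ^ n

/-- A commutative ring is a *big ideal ring* if every ideal is a big ideal. -/
def IsBigIdealRing (R : Type*) [CommRing R] : Prop :=
  ∀ I : Ideal R, I.IsBig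

set_option maxHeartbeats 1000000 in
/-- Every principal ideal domain is a big ideal domain. -/
lemma isBigIdealRing_of_pid (S : Type*) [CommRing S] [IsDomain S] [IsPrincipalIdealRing S] :
    IsBigIdealRing S := by
  intro I J hJI n hn
  refine lt_of_le_of_ne (Ideal.pow_right_mono hJI.le n) ?_
  intro heq
  obtain ⟨a, ha⟩ := (IsPrincipalIdealRing.principal I).principal
  obtain ⟨b, hb⟩ := (IsPrincipalIdealRing.principal J).principal
  rw [Ideal.submodule_span_eq] at ha hb
  subst ha hb
  rcases eq_or_ne a 0 with rfl | ha0
  · rw [Ideal.span_singleton_eq_bot.mpr rfl] at hJI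
    exact not_lt_bot hJI
  have hbmem : b ∈ Ideal.span {a} := hJI.le (Ideal.mem_span_singleton_self b)
  obtain ⟨c, rfl⟩ := Ideal.mem_span_singleton.mp hbmem
  have han : a ^ n ∈ Ideal.span {(a * c) ^ n} := by
    rw [← Ideal.span_singleton_pow, heq]
    exact Ideal.pow_mem_pow (Ideal.mem_span_singleton_self a) n
  obtain ⟨r, hr⟩ := Ideal.mem_span_singleton.mp han
  have hcu : IsUnit c := by
    have h1 : a ^ n * 1 = a ^ n * (c ^ n * r) := by rw [mul_one, ← mul_assoc, ← mul_pow]; exact hr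
    have h2 : (1 : S) = c ^ n * r := mul_left_cancel₀ (pow_ne_zero n ha0) h1
    obtain ⟨m, rfl⟩ := Nat.exists_eq_add_of_le hn
    have h3 : c ^ (m + 1) * r = 1 := by rw [add_comm]; exact h2.symm
    exact IsUnit.of_mul_eq_one (a := c) (c ^ m * r) (by rw [← mul_assoc, ← pow_succ']; exact h3)
  exact hJI.ne (by rw [Ideal.span_singleton_mul_right_unit hcu])

theorem isBigIdealRing_powerSeries_iff_isField (R : Type*) [CommRing R] [IsDomain R] :
    IsBigIdealRing (PowerSeries R) ↔ IsField R := by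
  constructor
  · intro h
    by_contra hF
    -- get a nonzero nonunit
    obtain ⟨a, ha0, hau⟩ : ∃ a : R, a ≠ 0 ∧ ¬ IsUnit a := by
      by_contra hc
      push_neg at hc
      exact hF ⟨exists_pair_ne R, mul_comm, fun {x} hx => by
        obtain ⟨u, hu⟩ := hc x hx
        exact ⟨↑u⁻¹, by rw [← hu]; exact u.mul_inv⟩⟩
    set c : PowerSeries R := PowerSeries.C a with hc
    set XX : PowerSeries R := PowerSeries.X with hXX
    set sJ : Set (PowerSeries R) := {c ^ 4, c ^ 3 * XX, c * XX ^ 3, XX ^ 4} with hsJ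
    set b : PowerSeries R := c ^ 2 * XX ^ 2 with hbdef
    set J : Ideal (PowerSeries R) := Ideal.span sJ with hJ
    set I : Ideal (PowerSeries R) := Ideal.span (insert b sJ) with hI
    -- b ∉ J
    have hb : b ∉ J := by
      intro hmem
      set q : R →+* R ⧸ Ideal.span {a ^ 3} := Ideal.Quotient.mk (Ideal.span {a ^ 3}) with hq
      set φ : PowerSeries R →+* PowerSeries (R ⧸ Ideal.span {a ^ 3}) := PowerSeries.map q with hφ
      have ha3 : q (a ^ 3) = 0 := Ideal.Quotient.eq_zero_iff_mem.mpr (Ideal.subset_span rfl)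
      have hqa3 : q a ^ 3 = 0 := by rw [map_pow] at ha3; exact ha3
      have hqa4 : q a ^ 4 = 0 := by
        rw [show q a ^ 4 = q a ^ 3 * q a by ring, hqa3, zero_mul]
      have hmap : φ b ∈ Ideal.map φ J := Ideal.mem_map_of_mem φ hmem
      have hle : Ideal.map φ J ≤ Ideal.span {(PowerSeries.X : PowerSeries (R ⧸ Ideal.span {a ^ 3})) ^ 3} := by
        rw [hJ, Ideal.map_span, Ideal.span_le]
        rintro x ⟨g, hg, rfl⟩
        simp only [hsJ, Set.mem_insert_iff, Set.mem_singleton_iff] at hg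
        rcases hg with rfl | rfl | rfl | rfl
        · have : φ (c ^ 4) = 0 := by
            rw [hφ, hc, map_pow, PowerSeries.map_C, ← map_pow, hqa4, map_zero]
          rw [this]; exact Ideal.zero_mem _
        · have : φ (c ^ 3 * XX) = 0 := by
            rw [hφ, hc, hXX, map_mul, map_pow, PowerSeries.map_C, PowerSeries.map_X, ← map_pow,
              hqa3, map_zero, zero_mul]
          rw [this]; exact Ideal.zero_mem _
        · refine Ideal.mem_span_singleton.mpr ?_
          simp only [hφ, hc, hXX, map_mul, map_pow, PowerSeries.map_C, PowerSeries.map_X]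
          exact Dvd.intro _ (mul_comm _ _)
        · refine Ideal.mem_span_singleton.mpr ?_
          simp only [hφ, hXX, map_pow, PowerSeries.map_X]
          exact pow_dvd_pow _ (by norm_num)
      have hdvd := Ideal.mem_span_singleton.mp (hle hmap)
      have hco := (PowerSeries.X_pow_dvd_iff.mp hdvd) 2 (by norm_num)
      have hφb : φ b = PowerSeries.C (q a ^ 2) * PowerSeries.X ^ 2 := by
        simp only [hbdef, hφ, hc, hXX, map_mul, map_pow, PowerSeries.map_C, PowerSeries.map_X,
          map_pow]
      rw [hφb] at hco
      have hco' : q a ^ 2 = 0 := by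
        rw [PowerSeries.coeff_C_mul, PowerSeries.coeff_X_pow] at hco
        simpa using hco
      rw [hq] at hco'
      have ha2 : a ^ 2 ∈ Ideal.span {a ^ 3} := by
        rw [← Ideal.Quotient.eq_zero_iff_mem, map_pow]
        exact hco'
      obtain ⟨r, hr⟩ := Ideal.mem_span_singleton.mp ha2
      have h1 : a ^ 2 * 1 = a ^ 2 * (a * r) := by
        rw [mul_one, ← mul_assoc, ← pow_succ]; exact hr
      exact hau (IsUnit.of_mul_eq_one (a := a) r (mul_left_cancel₀ (pow_ne_zero 2 ha0) h1).symm)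
    have hJI : J < I := by
      refine lt_of_le_of_ne (Ideal.span_mono (Set.subset_insert _ _)) (fun he => hb ?_)
      rw [he, hI]
      exact Ideal.subset_span (Set.mem_insert _ _)
    -- I ^ 2 ≤ J ^ 2
    have memJ : ∀ x ∈ sJ, x ∈ J := fun x hx => Ideal.subset_span hx
    have h1J : c ^ 4 ∈ J := memJ _ (by simp [hsJ])
    have h2J : c ^ 3 * XX ∈ J := memJ _ (by simp [hsJ])
    have h3J : c * XX ^ 3 ∈ J := memJ _ (by simp [hsJ])
    have h4J : XX ^ 4 ∈ J := memJ _ (by simp [hsJ])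
    have hbJ2 : ∀ g ∈ sJ, b * g ∈ J * J := by
      intro g hg
      simp only [hsJ, Set.mem_insert_iff, Set.mem_singleton_iff] at hg
      rcases hg with rfl | rfl | rfl | rfl
      · rw [show b * c ^ 4 = (c ^ 3 * XX) * (c ^ 3 * XX) by rw [hbdef]; ring]
        exact Ideal.mul_mem_mul h2J h2J
      · rw [show b * (c ^ 3 * XX) = (c ^ 4) * (c * XX ^ 3) by rw [hbdef]; ring]
        exact Ideal.mul_mem_mul h1J h3J
      · rw [show b * (c * XX ^ 3) = (c ^ 3 * XX) * (XX ^ 4) by rw [hbdef]; ring]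
        exact Ideal.mul_mem_mul h2J h4J
      · rw [show b * XX ^ 4 = (c * XX ^ 3) * (c * XX ^ 3) by rw [hbdef]; ring]
        exact Ideal.mul_mem_mul h3J h3J
    have h2 : I ^ 2 ≤ J ^ 2 := by
      rw [pow_two, pow_two, hI, Ideal.span_insert, Ideal.sup_mul, Ideal.mul_sup, Ideal.mul_sup]
      refine sup_le (sup_le ?_ ?_) (sup_le ?_ le_rfl)
      · rw [Ideal.span_singleton_mul_span_singleton]
        rw [Ideal.span_le]
        rintro x (rfl : x = b * b)
        rw [show b * b = (c ^ 4) * (XX ^ 4) by rw [hbdef]; ring]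
        exact Ideal.mul_mem_mul h1J h4J
      · rw [hJ, Ideal.span_mul_span', Ideal.span_le]
        rintro x ⟨y, hy, z, hz, rfl⟩
        rcases Set.mem_singleton_iff.mp hy with rfl
        exact hbJ2 z hz
      · rw [hJ, Ideal.span_mul_span', Ideal.span_le]
        rintro x ⟨y, hy, z, hz, rfl⟩
        rcases Set.mem_singleton_iff.mp hz with rfl
        show y * b ∈ J * J
        rw [mul_comm y b]
        exact hbJ2 y hy
    have hlt := h I J hJI 2 one_le_two
    exact absurd (lt_of_lt_of_le hlt h2) (lt_irrefl _)
  · intro hF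
    letI : Field R := hF.toField
    exact isBigIdealRing_of_pid (PowerSeries R)
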